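/- Let n ≥ 2 be an integer. Then lim_{a → 0⁺} K(n,a)/a² = 1/((2n+4)·V_n); that is, K(n,a) = a²/((2n+4)·V_n) + o(a²) as a → 0⁺. -/

import Mathlib

open MeasureTheory Real Filter
open scoped RealInnerProductSpace

noncomputable def poch (x : ℝ) (k : ℕ) : ℝ := ∏ i ∈ Finset.range k, (x + i)

noncomputable def incBeta (x α β : ℝ) : ℝ := ∫ t in (0:ℝ)..x, t ^ (α - 1) * (1 - t) ^ (β - 1)

noncomputable def sphereVol (n : ℕ) : ℝ :=
  2 * Real.pi ^ (((n : ℝ) + 1) / 2) / Real.Gamma (((n : ℝ) + 1) / 2)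

noncomputable def green (n : ℕ) (t : ℝ) : ℝ :=
  2 / (n * sphereVol n) * ∑' k : ℕ,
    poch n k / (((k : ℝ) + 1) * poch ((n : ℝ) / 2 + 1) k) *
      ((1 - t ^ 2 / 4) ^ (k + 1)
        - incBeta 1 ((n : ℝ) / 2) ((n : ℝ) / 2 + k + 1) / incBeta 1 ((n : ℝ) / 2) ((n : ℝ) / 2))

noncomputable def Kfun (n : ℕ) (a : ℝ) : ℝ :=
  2 / (n * sphereVol n) * ∑' k : ℕ,
    poch n k / (poch ((n : ℝ) / 2 + 1) k * ((k : ℝ) + 1)) *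
      (incBeta (Real.sin (a / 2) ^ 2) ((n : ℝ) / 2 + k + 1) ((n : ℝ) / 2) /
        incBeta (Real.sin (a / 2) ^ 2) ((n : ℝ) / 2) ((n : ℝ) / 2))

noncomputable def ballVol (n : ℕ) (a : ℝ) : ℝ :=
  sphereVol (n - 1) * ∫ r in (0:ℝ)..a, Real.sin r ^ (n - 1)

noncomputable def sphereMeasure (n : ℕ) :
    Measure (Metric.sphere (0 : EuclideanSpace ℝ (Fin (n + 1))) 1) :=
  (volume : Measure (EuclideanSpace ℝ (Fin (n + 1)))).toSphere


lemma incBeta_integrable {α β x : ℝ} (hα : 0 < α) (hx : 0 ≤ x) (hx1 : x < 1) :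
    IntervalIntegrable (fun t => t ^ (α - 1) * (1 - t) ^ (β - 1)) volume 0 x := by
  apply IntervalIntegrable.mul_continuousOn
  · exact intervalIntegral.intervalIntegrable_rpow' (by linarith)
  · apply ContinuousOn.rpow_const
    · exact (continuous_const.sub continuous_id).continuousOn
    · intro t ht
      rw [Set.uIcc_of_le hx] at ht
      left
      have := ht.2
      intro h; nlinarith

lemma int_rpow {c x : ℝ} (hc : 0 < c) (hx : 0 ≤ x) :
    ∫ t in (0:ℝ)..x, t ^ (c - 1) = x ^ c / c := by
  rw [integral_rpow (Or.inl (by linarith))]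
  rw [sub_add_cancel, Real.zero_rpow (by linarith), sub_zero]

lemma incBeta_le {α β x : ℝ} (hα : 0 < α) (hβ : 1 ≤ β) (hx : 0 ≤ x) (hx1 : x < 1) :
    incBeta x α β ≤ x ^ α / α := by
  rw [← int_rpow hα hx]
  apply intervalIntegral.integral_mono_on hx (incBeta_integrable hα hx hx1)
    (intervalIntegral.intervalIntegrable_rpow' (by linarith))
  intro t ht
  have h1 : (1 - t) ^ (β - 1) ≤ 1 :=
    Real.rpow_le_one (by linarith [ht.2]) (by linarith [ht.1]) (by linarith)
  calc t ^ (α - 1) * (1 - t) ^ (β - 1) ≤ t ^ (α - 1) * 1 := by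
        exact mul_le_mul_of_nonneg_left h1 (Real.rpow_nonneg ht.1 _)
    _ = t ^ (α - 1) := mul_one _

lemma le_incBeta {α β x : ℝ} (hα : 0 < α) (hβ : 1 ≤ β) (hx : 0 ≤ x) (hx1 : x < 1) :
    (1 - x) ^ (β - 1) * (x ^ α / α) ≤ incBeta x α β := by
  have key : ∫ t in (0:ℝ)..x, t ^ (α - 1) * (1 - x) ^ (β - 1)
      = (1 - x) ^ (β - 1) * (x ^ α / α) := by
    rw [intervalIntegral.integral_mul_const, int_rpow hα hx, mul_comm]
  rw [← key]
  apply intervalIntegral.integral_mono_on hx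
    ((intervalIntegral.intervalIntegrable_rpow' (by linarith)).mul_const _)
    (incBeta_integrable hα hx hx1)
  intro t ht
  exact mul_le_mul_of_nonneg_left
    (Real.rpow_le_rpow (by linarith) (by linarith [ht.2]) (by linarith))
    (Real.rpow_nonneg ht.1 _)

lemma incBeta_nonneg {α β x : ℝ} (hx : 0 ≤ x) (hx1 : x ≤ 1) : 0 ≤ incBeta x α β := by
  apply intervalIntegral.integral_nonneg hx
  intro t ht
  exact mul_nonneg (Real.rpow_nonneg ht.1 _) (Real.rpow_nonneg (by linarith [ht.2]) _)

lemma incBeta_pos {β x : ℝ} (hβ : 1 ≤ β) (hx : 0 < x) (hx1 : x < 1) :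
    0 < incBeta x β β := by
  have := le_incBeta (by linarith : (0:ℝ) < β) hβ hx.le hx1
  have h1 : 0 < (1 - x) ^ (β - 1) := Real.rpow_pos_of_pos (by linarith) _
  have h2 : 0 < x ^ β / β := div_pos (Real.rpow_pos_of_pos hx _) (by linarith)
  nlinarith

lemma incBeta_shift_le {β x : ℝ} (hβ : 1 ≤ β) (k : ℕ) (hx : 0 ≤ x) (hx1 : x < 1) :
    incBeta x (β + k + 1) β ≤ x ^ (k + 1) * incBeta x β β := by
  have key : ∫ t in (0:ℝ)..x, x ^ (k+1) * (t ^ (β - 1) * (1 - t) ^ (β - 1))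
      = x ^ (k + 1) * incBeta x β β := intervalIntegral.integral_const_mul _ _
  rw [← key]
  apply intervalIntegral.integral_mono_on hx
    (incBeta_integrable (by positivity) hx hx1)
    (((incBeta_integrable (by linarith) hx hx1)).const_mul _)
  intro t ht
  have hsplit : t ^ (β + k + 1 - 1) = t ^ ((k:ℝ) + 1) * t ^ (β - 1) := by
    rw [← Real.rpow_add' ht.1 (by push_cast; intro h; nlinarith)]
    ring_nf
  rw [hsplit]
  have htk : t ^ ((k:ℝ) + 1) ≤ x ^ (k + 1) := by
    rw [show ((k:ℝ) + 1) = ((k + 1 : ℕ) : ℝ) by push_cast; ring, Real.rpow_natCast]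
    exact pow_le_pow_left₀ ht.1 ht.2 _
  calc t ^ ((k:ℝ) + 1) * t ^ (β - 1) * (1 - t) ^ (β - 1)
      ≤ x ^ (k + 1) * t ^ (β - 1) * (1 - t) ^ (β - 1) := by
        apply mul_le_mul_of_nonneg_right _ (Real.rpow_nonneg (by linarith [ht.2]) _)
        exact mul_le_mul_of_nonneg_right htk (Real.rpow_nonneg ht.1 _)
    _ = x ^ (k + 1) * (t ^ (β - 1) * (1 - t) ^ (β - 1)) := by ring

lemma poch_pos {x : ℝ} (hx : 0 < x) (k : ℕ) : 0 < poch x k := by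
  apply Finset.prod_pos
  intro i _
  positivity

lemma poch_le {n k : ℕ} (hn : 2 ≤ n) : poch n k ≤ 2 ^ k * poch ((n:ℝ)/2 + 1) k := by
  induction k with
  | zero => simp [poch]
  | succ m ih =>
    have hq : 0 < poch ((n:ℝ)/2 + 1) m := poch_pos (by positivity) m
    have hfac : (n:ℝ) + m ≤ 2 * ((n:ℝ)/2 + 1 + m) := by push_cast; linarith
    have hpn : 0 ≤ poch (n:ℝ) m := Finset.prod_nonneg (fun i _ => by positivity)
    rw [poch, Finset.prod_range_succ, poch, Finset.prod_range_succ, ← poch, ← poch]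
    calc poch (n:ℝ) m * ((n:ℝ) + m) ≤ (2 ^ m * poch ((n:ℝ)/2 + 1) m) * ((n:ℝ) + m) := by
          apply mul_le_mul_of_nonneg_right ih (by push_cast; positivity)
      _ ≤ (2 ^ m * poch ((n:ℝ)/2 + 1) m) * (2 * ((n:ℝ)/2 + 1 + m)) := by
          apply mul_le_mul_of_nonneg_left hfac (by positivity)
      _ = 2 ^ (m+1) * (poch ((n:ℝ)/2 + 1) m * ((n:ℝ)/2 + 1 + m)) := by ring

lemma sin_div_lim : Tendsto (fun t : ℝ => Real.sin t / t) (nhdsWithin 0 {(0:ℝ)}ᶜ) (nhds 1) := by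
  have h := (Real.hasDerivAt_sin 0)
  rw [hasDerivAt_iff_tendsto_slope] at h
  rw [Real.cos_zero] at h
  refine h.congr' ?_
  filter_upwards [self_mem_nhdsWithin] with t ht
  simp [slope_def_field]

lemma ratio_lim {q : ℝ} (hq : 1 ≤ q) :
    Tendsto (fun x => incBeta x (q + 1) q / incBeta x q q / x)
      (nhdsWithin 0 (Set.Ioi 0)) (nhds (q / (q + 1))) := by
  have hmem : Set.Ioo (0:ℝ) 1 ∈ nhdsWithin (0:ℝ) (Set.Ioi 0) :=
    Ioo_mem_nhdsGT_of_mem (by constructor <;> norm_num)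
  have hcont : Tendsto (fun x : ℝ => (1 - x) ^ (q - 1)) (nhdsWithin 0 (Set.Ioi 0)) (nhds 1) := by
    have : Tendsto (fun x : ℝ => (1 - x) ^ (q - 1)) (nhds 0) (nhds ((1 - 0) ^ (q - 1))) := by
      apply Tendsto.rpow_const
      · exact (continuous_const.sub continuous_id).tendsto 0
      · left; norm_num
    simpa using this.mono_left nhdsWithin_le_nhds
  have hcont' : Tendsto (fun x : ℝ => (1 - x) ^ (1 - q)) (nhdsWithin 0 (Set.Ioi 0)) (nhds 1) := by
    have : Tendsto (fun x : ℝ => (1 - x) ^ (1 - q)) (nhds 0) (nhds ((1 - 0) ^ (1 - q))) := by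
      apply Tendsto.rpow_const
      · exact (continuous_const.sub continuous_id).tendsto 0
      · left; norm_num
    simpa using this.mono_left nhdsWithin_le_nhds
  have hlow : Tendsto (fun x : ℝ => (1 - x) ^ (q - 1) * (q / (q + 1)))
      (nhdsWithin 0 (Set.Ioi 0)) (nhds (q / (q + 1))) := by
    simpa using hcont.mul_const (q / (q + 1))
  have hup : Tendsto (fun x : ℝ => (1 - x) ^ (1 - q) * (q / (q + 1)))
      (nhdsWithin 0 (Set.Ioi 0)) (nhds (q / (q + 1))) := by
    simpa using hcont'.mul_const (q / (q + 1))
  apply tendsto_of_tendsto_of_tendsto_of_le_of_le' hlow hup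
  · -- lower bound eventually
    filter_upwards [hmem] with x hx
    obtain ⟨hx0, hx1⟩ := hx
    have hq0 : (0:ℝ) < q := by linarith
    have hB : 0 < incBeta x q q := incBeta_pos hq hx0 hx1
    have hxq : (0:ℝ) < x ^ q := Real.rpow_pos_of_pos hx0 _
    have hAge := le_incBeta (by linarith : (0:ℝ) < q + 1) hq hx0.le hx1
    have hBle := incBeta_le hq0 hq hx0.le hx1
    have hsplit : x ^ (q + 1) = x ^ q * x := by
      rw [Real.rpow_add hx0, Real.rpow_one]
    have hc : (0:ℝ) < (1 - x) ^ (q - 1) := Real.rpow_pos_of_pos (by linarith) _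
    rw [div_div, le_div_iff₀ (by positivity)]
    calc (1 - x) ^ (q - 1) * (q / (q + 1)) * (incBeta x q q * x)
        ≤ (1 - x) ^ (q - 1) * (q / (q + 1)) * ((x ^ q / q) * x) := by
          apply mul_le_mul_of_nonneg_left _ (by positivity)
          exact mul_le_mul_of_nonneg_right hBle hx0.le
      _ = (1 - x) ^ (q - 1) * (x ^ (q + 1) / (q + 1)) := by
          rw [hsplit]; field_simp
      _ ≤ incBeta x (q + 1) q := hAge
  · -- upper bound eventually
    filter_upwards [hmem] with x hx
    obtain ⟨hx0, hx1⟩ := hx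
    have hq0 : (0:ℝ) < q := by linarith
    have hB : 0 < incBeta x q q := incBeta_pos hq hx0 hx1
    have hxq : (0:ℝ) < x ^ q := Real.rpow_pos_of_pos hx0 _
    have hAle := incBeta_le (by linarith : (0:ℝ) < q + 1) hq hx0.le hx1
    have hBge := le_incBeta hq0 hq hx0.le hx1
    have hsplit : x ^ (q + 1) = x ^ q * x := by
      rw [Real.rpow_add hx0, Real.rpow_one]
    have hc : (0:ℝ) < (1 - x) ^ (q - 1) := Real.rpow_pos_of_pos (by linarith) _
    have hcc : (1 - x) ^ (1 - q) * (1 - x) ^ (q - 1) = 1 := by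
      rw [← Real.rpow_add (by linarith)]
      norm_num
    rw [div_div, div_le_iff₀ (by positivity)]
    calc incBeta x (q + 1) q ≤ x ^ (q + 1) / (q + 1) := hAle
      _ = (1 - x) ^ (1 - q) * (q / (q + 1)) * (((1 - x) ^ (q - 1) * (x ^ q / q)) * x) := by
          rw [hsplit, show (1 - x) ^ (1 - q) * (q / (q + 1)) * (((1 - x) ^ (q - 1) * (x ^ q / q)) * x)
              = ((1 - x) ^ (1 - q) * (1 - x) ^ (q - 1)) * ((q / (q + 1)) * (x ^ q / q) * x) from by
            ring, hcc, one_mul]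
          field_simp
      _ ≤ (1 - x) ^ (1 - q) * (q / (q + 1)) * (incBeta x q q * x) := by
          apply mul_le_mul_of_nonneg_left _
            (mul_nonneg (Real.rpow_nonneg (by linarith) _) (by positivity))
          exact mul_le_mul_of_nonneg_right hBge hx0.le

theorem stmt_11 (n : ℕ) (hn : 2 ≤ n) :
    Tendsto (fun a : ℝ => Kfun n a / a ^ 2) (nhdsWithin 0 (Set.Ioi 0))
      (nhds (1 / ((2 * (n : ℝ) + 4) * sphereVol n))) := by
  have hn2 : (2:ℝ) ≤ (n:ℝ) := by exact_mod_cast hn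
  have hn0 : (0:ℝ) < (n:ℝ) := by linarith
  set q : ℝ := (n:ℝ)/2 with hqdef
  have hq : 1 ≤ q := by rw [hqdef]; linarith
  set X : ℝ → ℝ := fun a => Real.sin (a/2) ^ 2 with hXdef
  set c : ℕ → ℝ := fun k => poch n k / (poch (q + 1) k * ((k:ℝ) + 1)) with hcdef
  set h : ℝ → ℕ → ℝ :=
    fun a k => c k * (incBeta (X a) (q + k + 1) q / incBeta (X a) q q) / a ^ 2 with hhdef
  set g : ℕ → ℝ := fun k => if k = 0 then q / (4 * (q + 1)) else 0 with hgdef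
  clear_value q X c h g
  have hmem : Set.Ioo (0:ℝ) 1 ∈ nhdsWithin (0:ℝ) (Set.Ioi 0) :=
    Ioo_mem_nhdsGT_of_mem (by constructor <;> norm_num)
  -- basic facts about X
  have hXpos : ∀ a ∈ Set.Ioo (0:ℝ) 1, 0 < X a := by
    intro a ha
    have h1 : 0 < Real.sin (a/2) :=
      Real.sin_pos_of_pos_of_lt_pi (by linarith [ha.1])
        (by nlinarith [Real.pi_gt_three, ha.2])
    rw [hXdef]
    positivity
  have hXle : ∀ a ∈ Set.Ioo (0:ℝ) 1, X a ≤ a ^ 2 / 4 := by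
    intro a ha
    have h1 : Real.sin (a/2) ≤ a/2 := Real.sin_le (by linarith [ha.1])
    have h2 : 0 ≤ Real.sin (a/2) :=
      Real.sin_nonneg_of_nonneg_of_le_pi (by linarith [ha.1])
        (by nlinarith [Real.pi_gt_three, ha.2])
    rw [hXdef]
    simp only
    nlinarith
  have hXlt1 : ∀ a ∈ Set.Ioo (0:ℝ) 1, X a < 1 := by
    intro a ha
    have := hXle a ha
    nlinarith [ha.1, ha.2]
  -- X tends to 0 within Ioi 0
  have hXnhds : Tendsto X (nhdsWithin 0 (Set.Ioi 0)) (nhds 0) := by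
    rw [hXdef]
    have : Tendsto (fun a : ℝ => Real.sin (a/2) ^ 2) (nhds 0) (nhds (Real.sin (0/2) ^ 2)) :=
      ((Real.continuous_sin.comp ((continuous_id : Continuous fun a : ℝ => a).div_const
        2)).pow 2).tendsto 0
    simpa using this.mono_left nhdsWithin_le_nhds
  have hXwithin : Tendsto X (nhdsWithin 0 (Set.Ioi 0)) (nhdsWithin 0 (Set.Ioi 0)) := by
    rw [tendsto_nhdsWithin_iff]
    refine ⟨hXnhds, ?_⟩
    filter_upwards [hmem] with a ha using hXpos a ha
  -- X a / a^2 → 1/4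
  have hquarter : Tendsto (fun a => X a / a ^ 2) (nhdsWithin 0 (Set.Ioi 0)) (nhds (1/4)) := by
    have hhalf : Tendsto (fun a : ℝ => a/2) (nhdsWithin 0 (Set.Ioi 0))
        (nhdsWithin 0 {(0:ℝ)}ᶜ) := by
      rw [tendsto_nhdsWithin_iff]
      constructor
      · simpa using (((continuous_id : Continuous fun a : ℝ => a).div_const
          2).tendsto 0).mono_left nhdsWithin_le_nhds
      · filter_upwards [self_mem_nhdsWithin] with a ha
        simp only [Set.mem_compl_iff, Set.mem_singleton_iff]
        have : (0:ℝ) < a := ha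
        positivity
    have t1 : Tendsto (fun a : ℝ => Real.sin (a/2) / (a/2)) (nhdsWithin 0 (Set.Ioi 0))
        (nhds 1) := sin_div_lim.comp hhalf
    have t2 : Tendsto (fun a : ℝ => (Real.sin (a/2) / (a/2)) ^ 2 * (1/4))
        (nhdsWithin 0 (Set.Ioi 0)) (nhds (1/4)) := by
      have := (t1.pow 2).mul_const (1/4 : ℝ)
      simpa using this
    refine t2.congr' ?_
    filter_upwards [hmem] with a ha
    have ha0 : a ≠ 0 := ne_of_gt ha.1
    rw [hXdef]
    show (Real.sin (a/2) / (a/2)) ^ 2 * (1/4) = Real.sin (a/2) ^ 2 / a ^ 2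
    field_simp
    ring
  -- pointwise limits
  have hab : ∀ k, Tendsto (fun a => h a k) (nhdsWithin 0 (Set.Ioi 0)) (nhds (g k)) := by
    intro k
    match k with
    | 0 =>
      have t1 : Tendsto (fun a => incBeta (X a) (q + 1) q / incBeta (X a) q q / X a)
          (nhdsWithin 0 (Set.Ioi 0)) (nhds (q / (q + 1))) := (ratio_lim hq).comp hXwithin
      have t2 := t1.mul hquarter
      have hval : q / (q + 1) * (1/4) = g 0 := by
        rw [hgdef]
        show q / (q + 1) * (1/4) = if (0:ℕ) = 0 then q / (4 * (q + 1)) else 0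
        rw [if_pos rfl, div_mul_div_comm, mul_one, mul_comm (q+1) 4]
      rw [hval] at t2
      refine t2.congr' ?_
      filter_upwards [hmem] with a ha
      have hB := incBeta_pos hq (hXpos a ha) (hXlt1 a ha)
      have hx0 : X a ≠ 0 := (hXpos a ha).ne'
      have ha0 : a ≠ 0 := ne_of_gt ha.1
      have hc0 : c 0 = 1 := by rw [hcdef]; simp [poch]
      show incBeta (X a) (q + 1) q / incBeta (X a) q q / X a * (X a / a ^ 2) = h a 0
      rw [hhdef]
      simp only [Nat.cast_zero, add_zero, hc0, one_mul]
      field_simp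
    | (k+1) =>
      have hgk : g (k+1) = 0 := by rw [hgdef]; simp
      rw [hgk]
      have hcnn : 0 ≤ c (k+1) := by
        rw [hcdef]
        apply div_nonneg _ _
        · exact Finset.prod_nonneg (fun i _ => by positivity)
        · have := poch_pos (show (0:ℝ) < q + 1 by linarith) (k+1)
          positivity
      have hupper : Tendsto (fun a => c (k+1) * ((X a) ^ (k+1) * (X a / a ^ 2)))
          (nhdsWithin 0 (Set.Ioi 0)) (nhds 0) := by
        have hXp : Tendsto (fun a => (X a) ^ (k+1)) (nhdsWithin 0 (Set.Ioi 0)) (nhds 0) := by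
          have := hXnhds.pow (k+1)
          simpa [zero_pow (Nat.succ_ne_zero k)] using this
        have := (hXp.mul hquarter).const_mul (c (k+1))
        simpa using this
      apply tendsto_of_tendsto_of_tendsto_of_le_of_le' tendsto_const_nhds hupper
      · filter_upwards [hmem] with a ha
        have hB := incBeta_pos hq (hXpos a ha) (hXlt1 a ha)
        have hA : 0 ≤ incBeta (X a) (q + (k+1:ℕ) + 1) q :=
          incBeta_nonneg (hXpos a ha).le (hXlt1 a ha).le
        have ha2 : (0:ℝ) < a ^ 2 := by nlinarith [ha.1]
        rw [hhdef]
        have : (0:ℝ) ≤ incBeta (X a) (q + ((k:ℕ)+1) + 1) q := by exact_mod_cast hA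
        positivity
      · filter_upwards [hmem] with a ha
        have hB := incBeta_pos hq (hXpos a ha) (hXlt1 a ha)
        have ha2 : (0:ℝ) < a ^ 2 := by nlinarith [ha.1]
        have hshift := incBeta_shift_le hq (k+1) (hXpos a ha).le (hXlt1 a ha)
        have hdiv : incBeta (X a) (q + ((k+1:ℕ):ℝ) + 1) q / incBeta (X a) q q
            ≤ (X a) ^ (k+1+1) := by
          rw [div_le_iff₀ hB]
          exact_mod_cast hshift
        show h a (k+1) ≤ c (k+1) * ((X a) ^ (k+1) * (X a / a ^ 2))
        rw [hhdef]
        calc c (k+1) * (incBeta (X a) (q + ((k+1:ℕ):ℝ) + 1) q / incBeta (X a) q q) / a ^ 2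
            ≤ c (k+1) * (X a) ^ (k+1+1) / a ^ 2 := by
              rw [div_le_div_iff_of_pos_right ha2]
              exact mul_le_mul_of_nonneg_left hdiv hcnn
          _ = c (k+1) * ((X a) ^ (k+1) * (X a / a ^ 2)) := by
              rw [pow_succ]; ring
  -- domination
  have hck : ∀ k, c k ≤ 2 ^ k := by
    intro k
    have hp := poch_pos (show (0:ℝ) < q + 1 by linarith) k
    rw [hcdef]
    rw [div_le_iff₀ (by positivity)]
    calc poch (n:ℝ) k ≤ 2 ^ k * poch (q + 1) k := by
          have := poch_le (n := n) (k := k) hn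
          rw [hqdef]; exact_mod_cast this
      _ ≤ 2 ^ k * (poch (q + 1) k * ((k:ℝ) + 1)) := by
          rw [mul_le_mul_iff_of_pos_left (by positivity)]
          nlinarith [hp, (Nat.cast_nonneg k : (0:ℝ) ≤ k)]
  have h_bound : ∀ᶠ a in nhdsWithin (0:ℝ) (Set.Ioi 0), ∀ k, ‖h a k‖ ≤ (1/2:ℝ) ^ k := by
    filter_upwards [hmem] with a ha
    intro k
    have hB := incBeta_pos hq (hXpos a ha) (hXlt1 a ha)
    have hA : 0 ≤ incBeta (X a) (q + (k:ℝ) + 1) q :=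
      incBeta_nonneg (hXpos a ha).le (hXlt1 a ha).le
    have ha2 : (0:ℝ) < a ^ 2 := by nlinarith [ha.1]
    have hcnn : 0 ≤ c k := by
      rw [hcdef]
      apply div_nonneg _ _
      · exact Finset.prod_nonneg (fun i _ => by positivity)
      · have := poch_pos (show (0:ℝ) < q + 1 by linarith) k
        positivity
    have hasq : a ^ 2 ≤ 1 := by nlinarith [ha.1, ha.2]
    have hXq : X a ≤ 1/4 := (hXle a ha).trans (by linarith)
    have hXa2 : X a / a ^ 2 ≤ 1/4 := by
      rw [div_le_iff₀ ha2]
      linarith [hXle a ha]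
    have hnn : 0 ≤ h a k := by
      rw [hhdef]
      exact div_nonneg (mul_nonneg hcnn (div_nonneg hA hB.le)) (by positivity)
    rw [Real.norm_eq_abs, abs_of_nonneg hnn]
    have hshift := incBeta_shift_le hq k (hXpos a ha).le (hXlt1 a ha)
    have hdiv : incBeta (X a) (q + (k:ℝ) + 1) q / incBeta (X a) q q ≤ (X a) ^ (k+1) := by
      rw [div_le_iff₀ hB]
      exact hshift
    have hXnn : 0 ≤ X a := (hXpos a ha).le
    calc h a k = c k * (incBeta (X a) (q + (k:ℝ) + 1) q / incBeta (X a) q q) / a ^ 2 := by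
          rw [hhdef]
      _ ≤ c k * (X a) ^ (k+1) / a ^ 2 := by
          rw [div_le_div_iff_of_pos_right ha2]
          exact mul_le_mul_of_nonneg_left hdiv hcnn
      _ = c k * ((X a) ^ k * (X a / a ^ 2)) := by rw [pow_succ]; ring
      _ ≤ 2 ^ k * ((1/4) ^ k * (1/4)) := by
          apply mul_le_mul (hck k) _ (by positivity) (by positivity)
          apply mul_le_mul (pow_le_pow_left₀ hXnn hXq k) hXa2 (by positivity) (by positivity)
      _ = (1/2:ℝ) ^ k * (1/4) := by
          rw [← mul_assoc, ← mul_pow]; norm_num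
      _ ≤ (1/2:ℝ) ^ k :=
          mul_le_of_le_one_right (pow_nonneg (by norm_num) k) (by norm_num)
  have h_sum : Summable (fun k : ℕ => (1/2:ℝ) ^ k) :=
    summable_geometric_of_lt_one (by norm_num) (by norm_num)
  have hmain : Tendsto (fun a => ∑' k, h a k) (nhdsWithin 0 (Set.Ioi 0))
      (nhds (∑' k, g k)) := tendsto_tsum_of_dominated_convergence h_sum hab h_bound
  have hgsum : ∑' k, g k = q / (4 * (q + 1)) := by
    rw [tsum_eq_single 0 (fun b hb => by rw [hgdef]; exact if_neg hb), hgdef]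
    exact if_pos rfl
  rw [hgsum] at hmain
  -- conclude
  have hV : 0 < sphereVol n := by
    rw [sphereVol]
    apply div_pos
    · positivity
    · exact Real.Gamma_pos_of_pos (by positivity)
  have hfinal := hmain.const_mul (2 / ((n:ℝ) * sphereVol n))
  have heq : (fun a : ℝ => Kfun n a / a ^ 2)
      = fun a => 2 / ((n:ℝ) * sphereVol n) * ∑' k, h a k := by
    funext a
    simp only [hhdef, hcdef, hXdef]
    rw [hqdef, Kfun, mul_div_assoc, tsum_div_const]
  rw [heq]
  have hval : 2 / ((n:ℝ) * sphereVol n) * (q / (4 * (q + 1)))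
      = 1 / ((2 * (n:ℝ) + 4) * sphereVol n) := by
    have hnne : (n:ℝ) ≠ 0 := hn0.ne'
    rw [hqdef, div_mul_div_comm]
    rw [show 2 * ((n:ℝ)/2) = ((n:ℝ) * 1) by ring,
      show (n:ℝ) * sphereVol n * (4 * ((n:ℝ)/2 + 1))
        = (n:ℝ) * ((2 * (n:ℝ) + 4) * sphereVol n) by ring,
      mul_div_mul_left _ _ hnne]
  rw [← hval]
  exact hfinal
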